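/- Let P be a k-by-n binary matrix and s ∈ F_2^n, and let P_s be the submatrix of rows p with p·sᵀ = 1. Define the random variable Y on F_2^n by choosing d, e ∈ F_2^n independently uniformly and outputting Σ_{p: p·dᵀ=1 and p·eᵀ=1} p. Then P(Y·sᵀ = 0) = P(c₁ᵀ·c₂ = 0 | c₁, c₂ ~ C_s), where C_s is the column span of P_s and c₁, c₂ are independent uniform codewords. -/

import Mathlib

open Finset

/-- The code `C_s`: the column span of the submatrix `P_s` of `P` consisting of the rows
not orthogonal to `s`, realized as the image of `d ↦ P_s ⬝ dᵀ`. -/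
def Cs {k n : ℕ} (P : Matrix (Fin k) (Fin n) (ZMod 2)) (s : Fin n → ZMod 2) :
    Finset ({i : Fin k // dotProduct (P i) s = 1} → ZMod 2) :=
  Finset.image (fun d : Fin n → ZMod 2 => fun i => dotProduct (P i.1) d) Finset.univ

lemma fiber_card_eq {G H : Type*} [AddGroup G] [AddGroup H] [Fintype G] [DecidableEq G] [DecidableEq H]
    (f : G → H) (hf : ∀ a b, f (a + b) = f a + f b) {c : H} (d0 : G) (h0 : f d0 = c) :
    (Finset.univ.filter (fun x => f x = c)).card
      = (Finset.univ.filter (fun x => f x = 0)).card := by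
  apply Finset.card_bij (fun x _ => x - d0)
  · intro x hx
    simp only [mem_filter, mem_univ, true_and] at hx ⊢
    have h := hf (x - d0) d0
    rw [sub_add_cancel, hx, h0] at h
    have : f (x - d0) + c = 0 + c := by rw [← h, zero_add]
    exact add_right_cancel this
  · intro a _ b _ hab
    exact sub_left_injective hab
  · intro y hy
    simp only [mem_filter, mem_univ, true_and] at hy
    refine ⟨y + d0, ?_, by simp⟩
    simp only [mem_filter, mem_univ, true_and, hf, hy, h0, zero_add]

theorem classical_bias_eq_code_orthogonality {k n : ℕ}
    (P : Matrix (Fin k) (Fin n) (ZMod 2)) (s : Fin n → ZMod 2) :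
    ((Finset.univ.filter (fun de : (Fin n → ZMod 2) × (Fin n → ZMod 2) =>
        dotProduct
          (∑ i ∈ Finset.univ.filter (fun i : Fin k =>
              dotProduct (P i) de.1 = 1 ∧ dotProduct (P i) de.2 = 1), P i)
          s = 0)).card : ℝ) / ((2 : ℝ) ^ n) ^ 2 =
      ((((Cs P s) ×ˢ (Cs P s)).filter
          (fun cc => dotProduct cc.1 cc.2 = 0)).card : ℝ) /
        (((Cs P s).card : ℝ)) ^ 2 := by
  classical
  set φ : (Fin n → ZMod 2) → ({i : Fin k // dotProduct (P i) s = 1} → ZMod 2) :=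
    fun d i => dotProduct (P i.1) d with hφ
  have hadd : ∀ a b, φ (a + b) = φ a + φ b := by
    intro a b; funext i; simp [hφ, dotProduct_add]
  have hφ0 : φ 0 = 0 := by funext i; simp [hφ]
  set K := (Finset.univ.filter (fun x => φ x = 0)).card with hK
  have hKpos : 0 < K :=
    Finset.card_pos.mpr ⟨0, Finset.mem_filter.mpr ⟨Finset.mem_univ 0, hφ0⟩⟩
  have hCs : Cs P s = Finset.image φ Finset.univ := rfl
  -- key: the parity condition equals the dot product of codewords
  have keyA : ∀ d e : Fin n → ZMod 2,
      dotProduct (∑ i ∈ Finset.univ.filter (fun i : Fin k =>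
          dotProduct (P i) d = 1 ∧ dotProduct (P i) e = 1), P i) s
        = dotProduct (φ d) (φ e) := by
    intro d e
    have h3 : ∀ x y z : ZMod 2,
        (if x = 1 ∧ y = 1 then z else 0) = (if z = 1 then x * y else 0) := by decide
    have hL : dotProduct (∑ i ∈ Finset.univ.filter (fun i : Fin k =>
        dotProduct (P i) d = 1 ∧ dotProduct (P i) e = 1), P i) s
        = ∑ i ∈ Finset.univ.filter (fun i : Fin k =>
            dotProduct (P i) d = 1 ∧ dotProduct (P i) e = 1),
            dotProduct (P i) s := by
      exact sum_dotProduct _ _ _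
    rw [hL, Finset.sum_filter]
    have hR : dotProduct (φ d) (φ e)
        = ∑ i : Fin k, if dotProduct (P i) s = 1
            then dotProduct (P i) d * dotProduct (P i) e else 0 := by
      unfold dotProduct
      rw [← Finset.sum_filter]
      exact (Finset.sum_subtype
        (Finset.univ.filter (fun i : Fin k => dotProduct (P i) s = 1))
        (fun x => by rw [Finset.mem_filter]; simp [dotProduct]) (fun i => dotProduct (P i) d * dotProduct (P i) e)).symm
    rw [hR]
    exact Finset.sum_congr rfl fun i _ => h3 _ _ _
  have hfiber : ∀ c ∈ Cs P s, (Finset.univ.filter (fun x => φ x = c)).card = K := by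
    intro c hc
    rw [hCs] at hc
    obtain ⟨d0, -, h0⟩ := Finset.mem_image.mp hc
    exact fiber_card_eq φ hadd d0 h0
  have htot : (2 : ℕ) ^ n = (Cs P s).card * K := by
    have h := Finset.card_eq_sum_card_fiberwise
      (f := φ) (s := Finset.univ) (t := Cs P s)
      (fun x _ => hCs ▸ Finset.mem_image_of_mem φ (Finset.mem_univ x))
    rw [Finset.sum_congr rfl hfiber, Finset.sum_const, smul_eq_mul] at h
    simpa using h
  set t := ((Cs P s) ×ˢ (Cs P s)).filter (fun cc => dotProduct cc.1 cc.2 = 0) with ht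
  set S := Finset.univ.filter (fun de : (Fin n → ZMod 2) × (Fin n → ZMod 2) =>
        dotProduct
          (∑ i ∈ Finset.univ.filter (fun i : Fin k =>
              dotProduct (P i) de.1 = 1 ∧ dotProduct (P i) de.2 = 1), P i)
          s = 0) with hS
  have hSmem : ∀ de : (Fin n → ZMod 2) × (Fin n → ZMod 2),
      de ∈ S ↔ dotProduct (φ de.1) (φ de.2) = 0 := by
    intro de
    simp only [hS, Finset.mem_filter, Finset.mem_univ, true_and, keyA de.1 de.2]
  have hcount : S.card = t.card * K ^ 2 := by
    rw [Finset.card_eq_sum_card_fiberwise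
      (f := fun de => (φ de.1, φ de.2)) (t := t) ?_]
    · rw [Finset.sum_congr rfl ?_, Finset.sum_const, smul_eq_mul]
      intro b hb
      rw [ht, Finset.mem_filter] at hb
      obtain ⟨hb1, hb2⟩ := hb
      rw [Finset.mem_product] at hb1
      have hfe : S.filter (fun de => (φ de.1, φ de.2) = b)
          = (Finset.univ.filter (fun x => φ x = b.1)) ×ˢ
            (Finset.univ.filter (fun x => φ x = b.2)) := by
        ext de
        simp only [Finset.mem_filter, Finset.mem_product, Finset.mem_univ, true_and,
          Prod.ext_iff, hSmem de]
        constructor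
        · rintro ⟨-, h1, h2⟩; exact ⟨h1, h2⟩
        · rintro ⟨h1, h2⟩; exact ⟨by rw [h1, h2]; exact hb2, h1, h2⟩
      rw [hfe, Finset.card_product, hfiber _ hb1.1, hfiber _ hb1.2, sq]
    · intro de hde
      rw [Finset.mem_coe, ht, Finset.mem_filter, Finset.mem_product]
      refine ⟨⟨?_, ?_⟩, (hSmem de).mp hde⟩
      · exact hCs ▸ Finset.mem_image_of_mem φ (Finset.mem_univ de.1)
      · exact hCs ▸ Finset.mem_image_of_mem φ (Finset.mem_univ de.2)
  rw [hcount]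
  have h2n : ((2 : ℝ) ^ n) = ((Cs P s).card : ℝ) * (K : ℝ) := by
    rw [← Nat.cast_mul, ← htot]; push_cast; ring
  rw [h2n]
  have hKne : (K : ℝ) ≠ 0 := by positivity
  push_cast
  field_simp
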